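/- arXiv:2501.08210 — 2 statements merged into one kernel-verified Lean document; each statement's English description precedes it below -/
import Mathlib

section
/- The projection onto the closed ball of radius α of the mixed ℓ_{1,2} norm maps x to the vector whose 𝔤-th group is (x_𝔤/‖x_𝔤‖₂)·max(‖x_𝔤‖₂ − β, 0), where the vector of group norms (‖x_𝔤‖₂)_𝔤 projected onto the ℓ₁-ball of radius α equals (max(‖x_𝔤‖₂ − β, 0))_𝔤 for some β ≥ 0. That is, if (r_𝔤)_𝔤 with r_𝔤 = ‖x_𝔤‖₂ and P_{ℓ₁-ball}(r) = (max(r_𝔤 − β, 0))_𝔤, then P_{B_{ℓ1,2}}(x)_𝔤 = (max(r_𝔤 − β,0)/r_𝔤) x_𝔤 (interpreted as 0 when r_𝔤 = 0). -/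
open Finset in
/-- the projection onto the `ℓ_{1,2}`-ball of radius `α` acts
groupwise by `x_𝔤 ↦ (max(‖x_𝔤‖₂ − β, 0)/‖x_𝔤‖₂) x_𝔤` (interpreted as `0` when
`‖x_𝔤‖₂ = 0`), where `β ≥ 0` is such that the Euclidean projection of the vector
of group norms onto the `ℓ₁`-ball of radius `α` is `(max(‖x_𝔤‖₂ − β, 0))_𝔤`. -/
theorem l12_ball_projection_formula
    (N K : ℕ) (gr : Fin N → Fin K) (hgr : Function.Surjective gr)
    (norm12 : EuclideanSpace ℝ (Fin N) → ℝ)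
    (hnorm12 : ∀ v, norm12 v =
      ∑ g : Fin K, Real.sqrt (∑ i ∈ univ.filter (fun i => gr i = g), (v i) ^ 2))
    (α : ℝ) (hα : 0 ≤ α) (x : EuclideanSpace ℝ (Fin N))
    -- the vector of group norms
    (r : EuclideanSpace ℝ (Fin K))
    (hr : ∀ g, r g = Real.sqrt (∑ i ∈ univ.filter (fun i => gr i = g), (x i) ^ 2))
    -- `β ≥ 0` and the soft-thresholded vector is the `ℓ₁`-ball projection of `r`
    (β : ℝ) (hβ : 0 ≤ β)
    (soft : EuclideanSpace ℝ (Fin K)) (hsoft : ∀ g, soft g = max (r g - β) 0)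
    (hproj1 : ∑ g : Fin K, |soft g| ≤ α)
    (hproj2 : ∀ s : EuclideanSpace ℝ (Fin K),
      (∑ g : Fin K, |s g| ≤ α) → ‖soft - r‖ ≤ ‖s - r‖)
    -- the groupwise-shrunk vector
    (y : EuclideanSpace ℝ (Fin N))
    (hy : ∀ i, y i = (max (r (gr i) - β) 0 / r (gr i)) * x i) :
    norm12 y ≤ α ∧ ∀ z : EuclideanSpace ℝ (Fin N), norm12 z ≤ α → ‖y - x‖ ≤ ‖z - x‖ := by
  have hS : ∀ g, (0:ℝ) ≤ ∑ i ∈ univ.filter (fun i => gr i = g), (x i)^2 :=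
    fun g => Finset.sum_nonneg fun i _ => sq_nonneg _
  have hr0 : ∀ g, 0 ≤ r g := fun g => (hr g) ▸ Real.sqrt_nonneg _
  have hr2 : ∀ g, (r g)^2 = ∑ i ∈ univ.filter (fun i => gr i = g), (x i)^2 := by
    intro g; rw [hr g, Real.sq_sqrt (hS g)]
  have hsoft0 : ∀ g, 0 ≤ soft g := fun g => (hsoft g) ▸ le_max_right _ _
  have hsoftz : ∀ g, r g = 0 → soft g = 0 := by
    intro g hg; rw [hsoft g, hg, zero_sub, max_eq_right (neg_nonpos.2 hβ)]
  -- squared norms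
  have hnsqN : ∀ v : EuclideanSpace ℝ (Fin N), ‖v‖^2 = ∑ i, (v i)^2 := by
    intro v
    rw [EuclideanSpace.norm_eq, Real.sq_sqrt (by positivity)]
    simp [Real.norm_eq_abs, sq_abs]
  have hnsqK : ∀ v : EuclideanSpace ℝ (Fin K), ‖v‖^2 = ∑ g, (v g)^2 := by
    intro v
    rw [EuclideanSpace.norm_eq, Real.sq_sqrt (by positivity)]
    simp [Real.norm_eq_abs, sq_abs]
  -- group sums of y
  have hyg : ∀ g, ∑ i ∈ univ.filter (fun i => gr i = g), (y i)^2 = (soft g)^2 := by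
    intro g
    have h1 : ∀ i ∈ univ.filter (fun i => gr i = g),
        (y i)^2 = (soft g / r g)^2 * (x i)^2 := by
      intro i hi
      rw [Finset.mem_filter] at hi
      rw [hy i, hi.2, ← hsoft g, mul_pow, div_pow]
    rw [Finset.sum_congr rfl h1, ← Finset.mul_sum, ← hr2]
    by_cases h : r g = 0
    · rw [h, hsoftz g h]; ring
    · field_simp
  have hyx : ∀ g, ∑ i ∈ univ.filter (fun i => gr i = g), (y i - x i)^2
      = (soft g - r g)^2 := by
    intro g
    have h1 : ∀ i ∈ univ.filter (fun i => gr i = g),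
        (y i - x i)^2 = (soft g / r g - 1)^2 * (x i)^2 := by
      intro i hi
      rw [Finset.mem_filter] at hi
      rw [hy i, hi.2, ← hsoft g]; ring
    rw [Finset.sum_congr rfl h1, ← Finset.mul_sum, ← hr2]
    by_cases h : r g = 0
    · rw [h, hsoftz g h]; ring
    · field_simp
  constructor
  · rw [hnorm12]
    calc ∑ g : Fin K, Real.sqrt (∑ i ∈ univ.filter (fun i => gr i = g), (y i)^2)
        = ∑ g : Fin K, |soft g| := by
          refine Finset.sum_congr rfl fun g _ => ?_
          rw [hyg g, Real.sqrt_sq_eq_abs]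
      _ ≤ α := hproj1
  · intro z hz
    set s : EuclideanSpace ℝ (Fin K) :=
      WithLp.toLp 2 (fun g => Real.sqrt (∑ i ∈ univ.filter (fun i => gr i = g), (z i)^2)) with hs
    have hs0 : ∀ g, 0 ≤ s g := fun g => Real.sqrt_nonneg _
    have hsle : ∑ g : Fin K, |s g| ≤ α := by
      calc ∑ g : Fin K, |s g| = ∑ g : Fin K, s g := by
            exact Finset.sum_congr rfl fun g _ => abs_of_nonneg (hs0 g)
        _ ≤ α := by rw [hnorm12 z] at hz; exact hz
    have hkey := hproj2 s hsle
    -- reverse triangle ineq per group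
    have hrev : ∀ g, (s g - r g)^2 ≤ ∑ i ∈ univ.filter (fun i => gr i = g), (z i - x i)^2 := by
      intro g
      set T := univ.filter (fun i => gr i = g)
      have hcs : ∑ i ∈ T, z i * x i ≤ s g * r g := by
        rw [hs, hr g]
        exact Real.sum_mul_le_sqrt_mul_sqrt T z x
      have hexp : ∑ i ∈ T, (z i - x i)^2
          = ∑ i ∈ T, (z i)^2 - 2 * ∑ i ∈ T, (z i * x i) + ∑ i ∈ T, (x i)^2 := by
        rw [Finset.mul_sum, ← Finset.sum_sub_distrib, ← Finset.sum_add_distrib]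
        exact Finset.sum_congr rfl fun i _ => by ring
      have hsz : (s g)^2 = ∑ i ∈ T, (z i)^2 := by
        rw [hs]; exact Real.sq_sqrt (Finset.sum_nonneg fun i _ => sq_nonneg _)
      have hrz := hr2 g
      nlinarith [hcs, hsz, hrz]
    -- assemble
    have h1 : ‖y - x‖^2 = ‖soft - r‖^2 := by
      rw [hnsqN, hnsqK]
      rw [← Finset.sum_fiberwise_of_maps_to (fun i _ => Finset.mem_univ (gr i))
        (fun i => ((y - x) i)^2)]
      refine Finset.sum_congr rfl fun g _ => ?_
      have : ∀ i ∈ univ.filter (fun i => gr i = g), ((y - x) i)^2 = (y i - x i)^2 := by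
        intro i _; simp
      rw [Finset.sum_congr rfl this, hyx g]
      simp
    have h2 : ‖s - r‖^2 ≤ ‖z - x‖^2 := by
      rw [hnsqN, hnsqK]
      rw [← Finset.sum_fiberwise_of_maps_to (fun i _ => Finset.mem_univ (gr i))
        (fun i => ((z - x) i)^2)]
      refine Finset.sum_le_sum fun g _ => ?_
      have : ∀ i ∈ univ.filter (fun i => gr i = g), ((z - x) i)^2 = (z i - x i)^2 := by
        intro i _; simp
      rw [Finset.sum_congr rfl this]
      have := hrev g
      simpa using this
    have h3 : ‖soft - r‖^2 ≤ ‖s - r‖^2 :=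
      pow_le_pow_left₀ (norm_nonneg _) hkey 2
    have : ‖y - x‖^2 ≤ ‖z - x‖^2 := by linarith
    exact (pow_le_pow_iff_left₀ (norm_nonneg _) (norm_nonneg _) (by norm_num)).mp this
end

section
/- The Euclidean projection of a point r ∈ R^n with ‖r‖₁ > α onto the ℓ₁-ball {y : ‖y‖₁ ≤ α} is given by soft-thresholding: P(r)_i = sign(r_i)·max(|r_i| − β, 0), where β > 0 is the unique value such that Σ_i max(|r_i| − β, 0) = α. -/
open Finset in
/-- the Euclidean projection of `r` with `‖r‖₁ > α` onto the
`ℓ₁`-ball of radius `α > 0` is soft-thresholding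
`P(r)ᵢ = sign(rᵢ)·max(|rᵢ| − β, 0)` where `β > 0` is the unique value with
`Σᵢ max(|rᵢ| − β, 0) = α`. -/
theorem l1_ball_projection_soft_thresholding
    (n : ℕ) (α : ℝ) (hα : 0 < α) (r : EuclideanSpace ℝ (Fin n))
    (hr : α < ∑ i : Fin n, |r i|) :
    ∃! β : ℝ, 0 < β ∧ (∑ i : Fin n, max (|r i| - β) 0) = α ∧
      ∀ P : EuclideanSpace ℝ (Fin n),
        (∀ i, P i = Real.sign (r i) * max (|r i| - β) 0) →
        ((∑ i : Fin n, |P i|) ≤ α ∧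
          ∀ y : EuclideanSpace ℝ (Fin n), (∑ i : Fin n, |y i|) ≤ α →
            ‖P - r‖ ≤ ‖y - r‖) := by
  set f : ℝ → ℝ := fun β => ∑ i : Fin n, max (|r i| - β) 0 with hfdef
  set S : ℝ := ∑ i : Fin n, |r i| with hSdef
  have hS0 : 0 < S := lt_trans hα hr
  have hf0 : f 0 = S := by
    simp only [hfdef, sub_zero]
    exact Finset.sum_congr rfl fun i _ => max_eq_left (abs_nonneg _)
  have hfS : f S = 0 := by
    refine Finset.sum_eq_zero fun i _ => max_eq_right ?_
    have : |r i| ≤ S := Finset.single_le_sum (fun j _ => abs_nonneg (r j))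
      (Finset.mem_univ i)
    linarith
  -- strict decrease where positive
  have hstrict : ∀ a b : ℝ, a < b → 0 < f b → f b < f a := by
    intro a b hab hpos
    obtain ⟨i, _, hi⟩ : ∃ i ∈ Finset.univ, (0:ℝ) < max (|r i| - b) 0 := by
      by_contra h
      push_neg at h
      have : f b ≤ 0 := Finset.sum_nonpos fun i hi => h i hi
      linarith
    have hib : b < |r i| := by
      by_contra h
      push_neg at h
      rw [max_eq_right (by linarith)] at hi
      exact lt_irrefl _ hi
    refine Finset.sum_lt_sum (fun j _ => max_le_max (by linarith) le_rfl) ⟨i, Finset.mem_univ i, ?_⟩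
    rw [max_eq_left (by linarith), max_eq_left (by linarith)]
    linarith
  -- existence of β via IVT
  have hcont : Continuous f := by
    apply continuous_finset_sum
    intro i _
    exact (continuous_const.sub continuous_id).max continuous_const
  have hmem : α ∈ Set.Icc (f S) (f 0) := by
    rw [hfS, hf0]; exact ⟨hα.le, hr.le⟩
  obtain ⟨β, hβmem, hfβ⟩ := intermediate_value_Icc' hS0.le hcont.continuousOn hmem
  have hβpos : 0 < β := by
    rcases lt_or_eq_of_le hβmem.1 with h | h
    · exact h
    · exfalso; rw [← h] at hfβ; rw [hf0] at hfβ; linarith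
  refine ⟨β, ⟨hβpos, hfβ, ?_⟩, ?_⟩
  · -- projection property
    intro P hP
    have hPabs : ∀ i, |P i| = max (|r i| - β) 0 := by
      intro i
      rw [hP i, abs_mul, abs_of_nonneg (le_max_right (|r i| - β) 0)]
      rcases le_or_gt (|r i|) β with h | h
      · rw [max_eq_right (by linarith)]; ring
      · have hri : r i ≠ 0 := by
          intro h0; rw [h0, abs_zero] at h; linarith
        rcases Real.sign_apply_eq_of_ne_zero (r i) hri with hs | hs <;>
          rw [hs] <;> simp
    have hPsum : ∑ i : Fin n, |P i| = α := by
      rw [← hfβ]; exact Finset.sum_congr rfl fun i _ => hPabs i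
    refine ⟨hPsum.le, ?_⟩
    intro y hy
    have hterm : ∀ i, (r i - P i) * (y i - P i) ≤ β * |y i| - β * |P i| := by
      intro i
      rw [hPabs i, hP i]
      rcases le_or_gt (|r i|) β with h | h
      · rw [max_eq_right (by linarith)]
        have h1 : r i * y i ≤ |r i| * |y i| := by
          calc r i * y i ≤ |r i * y i| := le_abs_self _
          _ = |r i| * |y i| := abs_mul _ _
        have h2 : |r i| * |y i| ≤ β * |y i| :=
          mul_le_mul_of_nonneg_right h (abs_nonneg _)
        simp only [mul_zero, sub_zero]
        linarith
      · rw [max_eq_left (by linarith)]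
        have hri : r i ≠ 0 := by
          intro h0; rw [h0, abs_zero] at h; linarith
        have hy1 : y i ≤ |y i| := le_abs_self _
        have hy2 : -|y i| ≤ y i := neg_abs_le _
        rcases lt_trichotomy (r i) 0 with hsgn | hsgn | hsgn
        · rw [Real.sign_of_neg hsgn, abs_of_neg hsgn]
          nlinarith
        · exact absurd hsgn hri
        · rw [Real.sign_of_pos hsgn, abs_of_pos hsgn]
          nlinarith
    have hsum : ∑ i : Fin n, (r i - P i) * (y i - P i) ≤ 0 := by
      have h1 : ∑ i : Fin n, (r i - P i) * (y i - P i)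
          ≤ ∑ i : Fin n, (β * |y i| - β * |P i|) :=
        Finset.sum_le_sum fun i _ => hterm i
      have h2 : ∑ i : Fin n, (β * |y i| - β * |P i|)
          = β * (∑ i : Fin n, |y i|) - β * (∑ i : Fin n, |P i|) := by
        rw [Finset.sum_sub_distrib, Finset.mul_sum, Finset.mul_sum]
      have h3 : β * (∑ i : Fin n, |y i|) ≤ β * α :=
        mul_le_mul_of_nonneg_left hy hβpos.le
      rw [h2, hPsum] at h1
      linarith
    have hip : (@inner ℝ _ _ (y - P) (P - r)) = ∑ i : Fin n, (y i - P i) * (P i - r i) := by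
      simp [PiLp.inner_apply, RCLike.inner_apply, conj_trivial]
      exact Finset.sum_congr rfl fun i _ => mul_comm _ _
    have hip2 : (0:ℝ) ≤ (@inner ℝ _ _ (y - P) (P - r)) := by
      rw [hip]
      have : ∑ i : Fin n, (y i - P i) * (P i - r i)
          = -∑ i : Fin n, (r i - P i) * (y i - P i) := by
        rw [← Finset.sum_neg_distrib]
        exact Finset.sum_congr rfl fun i _ => by ring
      rw [this]
      linarith
    have hyr : y - r = (y - P) + (P - r) := by abel
    have hn : ‖P - r‖^2 ≤ ‖y - r‖^2 := by
      rw [hyr, norm_add_sq_real]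
      nlinarith [sq_nonneg ‖y - P‖]
    exact (pow_le_pow_iff_left₀ (norm_nonneg _) (norm_nonneg _) two_ne_zero).1 hn
  · -- uniqueness
    rintro γ ⟨hγpos, hfγ, -⟩
    have hfγ' : f γ = α := hfγ
    rcases lt_trichotomy γ β with h | h | h
    · have := hstrict γ β h (by rw [hfβ]; exact hα)
      rw [hfβ, hfγ'] at this; linarith
    · exact h
    · have := hstrict β γ h (by rw [hfγ']; exact hα)
      rw [hfβ, hfγ'] at this; linarith
end
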